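/- Let n ≥ 3 and let X_1, …, X_n be jointly distributed random variables taking values in finite sets (i.e. there is a single joint probability distribution of (X_1,…,X_n)). Then for every i ∈ {1,…,n} (indices taken modulo n, so X_{n+1} = X_1), the joint Shannon entropies satisfy the chained n-cycle inequality H(X_i X_{i+1}) + ∑_{j ∉ {i, i+1}} H(X_j) ≤ ∑_{j ≠ i} H(X_j X_{j+1}). -/

import Mathlib

/-- Shannon entropy (in bits) of a finitely supported weight function,
with the convention `0 * logb 2 0 = 0` (automatic since `Real.logb 2 0 = 0`). -/
noncomputable def shannonEntropy {β : Type*} [Fintype β] (q : β → ℝ) : ℝ :=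
  -∑ b, q b * Real.logb 2 (q b)

/-- Joint Shannon entropy of a random variable `X` on a finite probability space
with weights `p`. -/
noncomputable def jointEntropy {Ω β : Type*} [Fintype Ω] [Fintype β] [DecidableEq β]
    (p : Ω → ℝ) (X : Ω → β) : ℝ :=
  shannonEntropy (fun b => ∑ ω ∈ Finset.univ.filter (fun ω => X ω = b), p ω)

open Finset

section Aux

variable {Ω : Type*} [Fintype Ω]

/-- pushforward distribution -/
noncomputable def Dst {β : Type*} [Fintype β] [DecidableEq β] (p : Ω → ℝ) (X : Ω → β) :
    β → ℝ :=
  fun b => ∑ ω ∈ Finset.univ.filter (fun ω => X ω = b), p ω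

lemma jointEntropy_eq {β : Type*} [Fintype β] [DecidableEq β] (p : Ω → ℝ) (X : Ω → β) :
    jointEntropy p X = shannonEntropy (Dst p X) := rfl

/-- natural-log entropy -/
noncomputable def nent {β : Type*} [Fintype β] (q : β → ℝ) : ℝ := -∑ b, q b * Real.log (q b)

lemma shannonEntropy_eq {β : Type*} [Fintype β] (q : β → ℝ) :
    shannonEntropy q = nent q / Real.log 2 := by
  unfold shannonEntropy nent Real.logb
  rw [neg_div, Finset.sum_div]
  congr 1
  exact Finset.sum_congr rfl fun b _ => by ring

lemma Dst_nonneg {β : Type*} [Fintype β] [DecidableEq β] {p : Ω → ℝ} (hp : ∀ ω, 0 ≤ p ω)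
    (X : Ω → β) (b : β) : 0 ≤ Dst p X b :=
  Finset.sum_nonneg fun ω _ => hp ω

lemma le_Dst {β : Type*} [Fintype β] [DecidableEq β] {p : Ω → ℝ} (hp : ∀ ω, 0 ≤ p ω)
    (X : Ω → β) (ω : Ω) : p ω ≤ Dst p X (X ω) :=
  Finset.single_le_sum (fun ω' _ => hp ω') (by simp)

lemma Dst_comp {β γ : Type*} [Fintype β] [DecidableEq β] [Fintype γ] [DecidableEq γ]
    (p : Ω → ℝ) (X : Ω → β) (f : β → γ) :
    Dst (Dst p X) f = Dst p (f ∘ X) := by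
  funext c
  show (∑ b ∈ univ.filter (fun b => f b = c), ∑ ω ∈ univ.filter (fun ω => X ω = b), p ω) = _
  rw [Finset.sum_fiberwise_eq_sum_filter univ (univ.filter (fun b => f b = c)) X p]
  congr 1
  ext ω
  simp [Function.comp]

lemma sum_Dst {β : Type*} [Fintype β] [DecidableEq β] (p : Ω → ℝ) (X : Ω → β) :
    ∑ b, Dst p X b = ∑ ω, p ω :=
  Finset.sum_fiberwise univ X p

lemma nent_Dst_eq {β γ : Type*} [Fintype β] [Fintype γ] [DecidableEq γ]
    (q : β → ℝ) (f : β → γ) :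
    nent (Dst q f) = -∑ b, q b * Real.log (Dst q f (f b)) := by
  unfold nent
  congr 1
  rw [← Finset.sum_fiberwise univ f (fun b => q b * Real.log (Dst q f (f b)))]
  refine Finset.sum_congr rfl fun c _ => ?_
  show (∑ b ∈ univ.filter (fun b => f b = c), q b) * Real.log (Dst q f c) = _
  rw [Finset.sum_mul]
  refine Finset.sum_congr rfl fun b hb => ?_
  rw [(Finset.mem_filter.1 hb).2]

lemma nent_Dst_le {β γ : Type*} [Fintype β] [Fintype γ] [DecidableEq γ]
    {q : β → ℝ} (hq : ∀ b, 0 ≤ q b) (f : β → γ) :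
    nent (Dst q f) ≤ nent q := by
  rw [nent_Dst_eq]
  unfold nent
  apply neg_le_neg
  apply Finset.sum_le_sum
  intro b _
  rcases (hq b).eq_or_lt with h | h
  · simp [← h]
  · have hle : q b ≤ Dst q f (f b) := le_Dst hq f b
    exact mul_le_mul_of_nonneg_left (Real.log_le_log h hle) (hq b)

lemma nent_Dst_inj {β γ : Type*} [Fintype β] [Fintype γ] [DecidableEq γ]
    (q : β → ℝ) {f : β → γ} (hf : Function.Injective f) :
    nent (Dst q f) = nent q := by
  have hfib : ∀ b, Dst q f (f b) = q b := by
    intro b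
    show (∑ b' ∈ univ.filter (fun b' => f b' = f b), q b') = q b
    rw [show univ.filter (fun b' => f b' = f b) = {b} by
      ext b'; simp [hf.eq_iff]]
    exact Finset.sum_singleton _ _
  unfold nent
  congr 1
  rw [← Finset.sum_subset (Finset.subset_univ ((Finset.univ : Finset β).image f))]
  · rw [Finset.sum_image (fun a _ b _ h => hf h)]
    exact Finset.sum_congr rfl fun b _ => by rw [hfib b]
  · intro c _ hc
    have h0 : Dst q f c = 0 := by
      show (∑ b ∈ univ.filter (fun b => f b = c), q b) = 0
      rw [show univ.filter (fun b => f b = c) = ∅ by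
        ext b
        simp only [mem_filter, mem_univ, true_and, Finset.notMem_empty, iff_false]
        exact fun h => hc (Finset.mem_image.mpr ⟨b, Finset.mem_univ b, h⟩)]
      rfl
    rw [h0]
    simp

lemma key_ineq {P s u r : ℝ} (hP : 0 ≤ P) (hs : P ≤ s) (hu : P ≤ u) (hr : P ≤ r)
    (hs0 : 0 ≤ s) (hu0 : 0 ≤ u) (hr0 : 0 ≤ r) :
    P - s * u / r ≤ P * Real.log P + P * Real.log r - P * Real.log s - P * Real.log u := by
  rcases hP.eq_or_lt with h | h
  · rw [← h]
    simp only [zero_mul, add_zero, sub_zero, zero_sub, zero_mul]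
    have : 0 ≤ s * u / r := div_nonneg (mul_nonneg hs0 hu0) hr0
    linarith
  · have hs' : 0 < s := h.trans_le hs
    have hu' : 0 < u := h.trans_le hu
    have hr' : 0 < r := h.trans_le hr
    have hx : 0 < s * u / (P * r) := by positivity
    have hlog := Real.log_le_sub_one_of_pos hx
    have hexp : Real.log (s * u / (P * r)) =
        Real.log s + Real.log u - Real.log P - Real.log r := by
      rw [Real.log_div (by positivity) (by positivity), Real.log_mul hs'.ne' hu'.ne',
        Real.log_mul h.ne' hr'.ne']
      ring
    have hmul := mul_le_mul_of_nonneg_left hlog h.le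
    rw [hexp] at hmul
    have halg : P * (s * u / (P * r) - 1) = s * u / r - P := by
      field_simp
    rw [halg] at hmul
    nlinarith [hmul]

lemma nent_core {α β γ : Type*} [Fintype α] [Fintype β] [Fintype γ]
    [DecidableEq α] [DecidableEq β] [DecidableEq γ]
    (P : α × β × γ → ℝ) (hP : ∀ t, 0 ≤ P t) :
    nent P + nent (Dst P (fun t => t.2.1)) ≤
      nent (Dst P (fun t => (t.1, t.2.1))) + nent (Dst P Prod.snd) := by
  set s : α × β → ℝ := Dst P (fun t => (t.1, t.2.1)) with hs_def
  set u : β × γ → ℝ := Dst P Prod.snd with hu_def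
  set r : β → ℝ := Dst P (fun t => t.2.1) with hr_def
  have hs0 : ∀ x, 0 ≤ s x := Dst_nonneg hP _
  have hu0 : ∀ x, 0 ≤ u x := Dst_nonneg hP _
  have hr0 : ∀ x, 0 ≤ r x := Dst_nonneg hP _
  have hPs : ∀ t : α × β × γ, P t ≤ s (t.1, t.2.1) := le_Dst hP _
  have hPu : ∀ t : α × β × γ, P t ≤ u t.2 := le_Dst hP _
  have hPr : ∀ t : α × β × γ, P t ≤ r t.2.1 := le_Dst hP _
  have hrs : ∀ b, (∑ a, s (a, b)) = r b := by
    intro b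
    have h1 : r = Dst s Prod.snd := by rw [hs_def, hr_def, Dst_comp]; rfl
    rw [h1]
    show _ = ∑ x ∈ univ.filter (fun x : α × β => x.2 = b), s x
    rw [Finset.sum_filter, Fintype.sum_prod_type]
    simp
  have hru : ∀ b, (∑ c, u (b, c)) = r b := by
    intro b
    have h1 : r = Dst u Prod.fst := by rw [hu_def, hr_def, Dst_comp]; rfl
    rw [h1]
    show _ = ∑ x ∈ univ.filter (fun x : β × γ => x.1 = b), u x
    rw [Finset.sum_filter, Fintype.sum_prod_type, Finset.sum_comm]
    simp
  have key : ∀ t : α × β × γ, P t - s (t.1, t.2.1) * u t.2 / r t.2.1 ≤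
      P t * Real.log (P t) + P t * Real.log (r t.2.1)
        - P t * Real.log (s (t.1, t.2.1)) - P t * Real.log (u t.2) :=
    fun t => key_ineq (hP t) (hPs t) (hPu t) (hPr t) (hs0 _) (hu0 _) (hr0 _)
  have hA : (∑ t : α × β × γ, s (t.1, t.2.1) * u t.2 / r t.2.1) ≤ ∑ t, P t := by
    have e1 : (∑ t : α × β × γ, s (t.1, t.2.1) * u t.2 / r t.2.1)
        = ∑ b, ∑ c, ∑ a, s (a, b) * u (b, c) / r b := by
      rw [Fintype.sum_prod_type, Finset.sum_comm, Fintype.sum_prod_type]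
    have e2 : ∀ b, (∑ c, ∑ a, s (a, b) * u (b, c) / r b)
        = (∑ a, s (a, b)) * (∑ c, u (b, c)) / r b := by
      intro b
      rw [Finset.sum_mul_sum, Finset.sum_div, Finset.sum_comm]
      refine Finset.sum_congr rfl fun c _ => ?_
      rw [Finset.sum_div]
    rw [e1]
    calc (∑ b, ∑ c, ∑ a, s (a, b) * u (b, c) / r b)
        = ∑ b, r b * r b / r b := by
          refine Finset.sum_congr rfl fun b _ => ?_
          rw [e2, hrs, hru]
      _ ≤ ∑ b, r b := by
          refine Finset.sum_le_sum fun b _ => ?_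
          rcases (hr0 b).eq_or_lt with h | h
          · rw [← h]; simp
          · rw [mul_div_assoc, div_self h.ne', mul_one]
      _ = ∑ t, P t := sum_Dst P _
  have hsumkey := Finset.sum_le_sum (fun t (_ : t ∈ (univ : Finset (α × β × γ))) => key t)
  rw [nent_Dst_eq P (fun t => t.2.1), nent_Dst_eq P (fun t => (t.1, t.2.1)),
    nent_Dst_eq P Prod.snd]
  show -∑ t, P t * Real.log (P t) + -∑ t, P t * Real.log (r t.2.1) ≤
    -∑ t, P t * Real.log (s (t.1, t.2.1)) + -∑ t, P t * Real.log (u t.2)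
  have expand : (∑ t : α × β × γ, (P t * Real.log (P t) + P t * Real.log (r t.2.1)
      - P t * Real.log (s (t.1, t.2.1)) - P t * Real.log (u t.2)))
      = (∑ t, P t * Real.log (P t)) + (∑ t, P t * Real.log (r t.2.1))
        - (∑ t, P t * Real.log (s (t.1, t.2.1))) - (∑ t, P t * Real.log (u t.2)) := by
    rw [Finset.sum_sub_distrib, Finset.sum_sub_distrib, Finset.sum_add_distrib]
  have expand2 : (∑ t : α × β × γ, (P t - s (t.1, t.2.1) * u t.2 / r t.2.1))
      = (∑ t, P t) - ∑ t : α × β × γ, s (t.1, t.2.1) * u t.2 / r t.2.1 :=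
    Finset.sum_sub_distrib _ _
  rw [expand, expand2] at hsumkey
  linarith

end Aux

section Glue

variable {Ω : Type*} [Fintype Ω] {p : Ω → ℝ}

lemma jE_comp_le {β γ : Type*} [Fintype β] [DecidableEq β] [Fintype γ] [DecidableEq γ]
    (hp0 : ∀ ω, 0 ≤ p ω) (X : Ω → β) (f : β → γ) :
    jointEntropy p (f ∘ X) ≤ jointEntropy p X := by
  rw [jointEntropy_eq, jointEntropy_eq, ← Dst_comp, shannonEntropy_eq, shannonEntropy_eq]
  have h2 : (0:ℝ) < Real.log 2 := Real.log_pos one_lt_two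
  exact div_le_div_of_nonneg_right (nent_Dst_le (Dst_nonneg hp0 X) f) h2.le

lemma jE_comp_inj {β γ : Type*} [Fintype β] [DecidableEq β] [Fintype γ] [DecidableEq γ]
    (p : Ω → ℝ) (X : Ω → β) {f : β → γ} (hf : Function.Injective f) :
    jointEntropy p (f ∘ X) = jointEntropy p X := by
  rw [jointEntropy_eq, jointEntropy_eq, ← Dst_comp, shannonEntropy_eq, shannonEntropy_eq,
    nent_Dst_inj _ hf]

lemma jE_ssa {α β γ : Type*} [Fintype α] [Fintype β] [Fintype γ]
    [DecidableEq α] [DecidableEq β] [DecidableEq γ]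
    (hp0 : ∀ ω, 0 ≤ p ω) (A : Ω → α) (B : Ω → β) (C : Ω → γ) :
    jointEntropy p (fun ω => (A ω, B ω, C ω)) + jointEntropy p B ≤
      jointEntropy p (fun ω => (A ω, B ω)) + jointEntropy p (fun ω => (B ω, C ω)) := by
  set T : Ω → α × β × γ := fun ω => (A ω, B ω, C ω) with hT
  have e1 : jointEntropy p B = shannonEntropy (Dst (Dst p T) (fun t => t.2.1)) := by
    rw [Dst_comp]; rfl
  have e2 : jointEntropy p (fun ω => (A ω, B ω)) =
      shannonEntropy (Dst (Dst p T) (fun t => (t.1, t.2.1))) := by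
    rw [Dst_comp]; rfl
  have e3 : jointEntropy p (fun ω => (B ω, C ω)) =
      shannonEntropy (Dst (Dst p T) Prod.snd) := by
    rw [Dst_comp]; rfl
  rw [e1, e2, e3, jointEntropy_eq, shannonEntropy_eq, shannonEntropy_eq, shannonEntropy_eq,
    shannonEntropy_eq, ← add_div, ← add_div]
  have h2 : (0:ℝ) < Real.log 2 := Real.log_pos one_lt_two
  exact div_le_div_of_nonneg_right (nent_core (Dst p T) (Dst_nonneg hp0 T)) h2.le

/-- The triangle step: `H(A,C) + H(B) ≤ H(A,B) + H(B,C)`. -/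
lemma jE_triangle {α β γ : Type*} [Fintype α] [Fintype β] [Fintype γ]
    [DecidableEq α] [DecidableEq β] [DecidableEq γ]
    (hp0 : ∀ ω, 0 ≤ p ω) (A : Ω → α) (B : Ω → β) (C : Ω → γ) :
    jointEntropy p (fun ω => (A ω, C ω)) + jointEntropy p B ≤
      jointEntropy p (fun ω => (A ω, B ω)) + jointEntropy p (fun ω => (B ω, C ω)) := by
  have h1 : jointEntropy p (fun ω => (A ω, C ω)) ≤
      jointEntropy p (fun ω => (A ω, B ω, C ω)) := by
    have := jE_comp_le hp0 (fun ω => (A ω, B ω, C ω))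
      (fun t : α × β × γ => (t.1, t.2.2))
    exact this
  have h2 := jE_ssa hp0 A B C
  linarith

/-- Chained inequality along a path. -/
lemma jE_path {β : Type*} [Fintype β] [DecidableEq β]
    (hp0 : ∀ ω, 0 ≤ p ω) (V : ℕ → Ω → β) :
    ∀ k, 2 ≤ k →
      jointEntropy p (fun ω => (V 1 ω, V k ω)) +
        ∑ m ∈ Finset.Ico 2 k, jointEntropy p (V m) ≤
      ∑ m ∈ Finset.Ico 1 k, jointEntropy p (fun ω => (V m ω, V (m + 1) ω)) := by
  intro k hk
  induction k, hk using Nat.le_induction with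
  | base => simp
  | succ k hk ih =>
    rw [Finset.sum_Ico_succ_top (by omega : 2 ≤ k), Finset.sum_Ico_succ_top (by omega : 1 ≤ k)]
    have htri := jE_triangle hp0 (V 1) (V k) (V (k + 1))
    have hmono : jointEntropy p (fun ω => (V 1 ω, V (k + 1) ω)) +
        jointEntropy p (V k) ≤
        jointEntropy p (fun ω => (V 1 ω, V k ω)) +
          jointEntropy p (fun ω => (V k ω, V (k + 1) ω)) := htri
    linarith

end Glue

open scoped Fin.NatCast

theorem cycle_entropic_inequality {n : ℕ} [NeZero n] (hn : 3 ≤ n) {Ω : Type*} [Fintype Ω]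
    {α : Fin n → Type*} [∀ j, Fintype (α j)] [∀ j, DecidableEq (α j)]
    (p : Ω → ℝ) (hp0 : ∀ ω, 0 ≤ p ω) (hp1 : ∑ ω, p ω = 1)
    (X : ∀ j, Ω → α j) (i : Fin n) :
    jointEntropy p (fun ω => (X i ω, X (i + 1) ω)) +
      ∑ j ∈ Finset.univ.filter (fun j => j ≠ i ∧ j ≠ i + 1), jointEntropy p (X j) ≤
    ∑ j ∈ Finset.univ.filter (fun j => j ≠ i),
      jointEntropy p (fun ω => (X j ω, X (j + 1) ω)) := by
  classical
  -- embed everything into the sigma type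
  set B : Type _ := Σ j : Fin n, α j with hB
  set W : ℕ → Ω → B := fun m ω => ⟨i + (m : Fin n), X (i + (m : Fin n)) ω⟩ with hW
  -- entropies of W-terms equal entropies of X-terms
  have hW1 : ∀ m : ℕ, jointEntropy p (W m) = jointEntropy p (X (i + (m : Fin n))) := by
    intro m
    exact jE_comp_inj p (X (i + (m : Fin n))) (sigma_mk_injective (i := i + (m : Fin n)))
  have hWpair : ∀ m : ℕ,
      jointEntropy p (fun ω => (W m ω, W (m + 1) ω)) =
        jointEntropy p (fun ω => (X (i + (m : Fin n)) ω, X (i + (m : Fin n) + 1) ω)) := by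
    intro m
    have hcast : i + ((m + 1 : ℕ) : Fin n) = i + (m : Fin n) + 1 := by
      push_cast; rw [add_assoc]
    have : (fun ω => (W m ω, W (m + 1) ω)) =
        (fun x : α (i + (m : Fin n)) × α (i + (m : Fin n) + 1) =>
          ((⟨i + (m : Fin n), x.1⟩ : B), (⟨i + (m : Fin n) + 1, x.2⟩ : B))) ∘
          (fun ω => (X (i + (m : Fin n)) ω, X (i + (m : Fin n) + 1) ω)) := by
      funext ω
      show ((⟨i + ((m : ℕ) : Fin n), X (i + ((m : ℕ) : Fin n)) ω⟩ : B),
        (⟨i + ((m + 1 : ℕ) : Fin n), X (i + ((m + 1 : ℕ) : Fin n)) ω⟩ : B)) = _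
      rw [hcast]
      rfl
    rw [this]
    apply jE_comp_inj
    intro x y hxy
    simp only [Prod.mk.injEq] at hxy
    obtain ⟨h1, h2⟩ := hxy
    exact Prod.ext (sigma_mk_injective h1) (sigma_mk_injective h2)
  -- the path inequality with k = n
  have hpath := jE_path hp0 W n (by omega)
  -- identify the three pieces
  have hend : jointEntropy p (fun ω => (W 1 ω, W n ω)) =
      jointEntropy p (fun ω => (X i ω, X (i + 1) ω)) := by
    have hn0 : i + ((n : ℕ) : Fin n) = i := by rw [Fin.natCast_self, add_zero]
    have h1 : i + ((1 : ℕ) : Fin n) = i + 1 := by rw [Nat.cast_one]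
    have : (fun ω => (W 1 ω, W n ω)) =
        (fun x : α i × α (i + 1) =>
          ((⟨i + 1, x.2⟩ : B), (⟨i, x.1⟩ : B))) ∘ (fun ω => (X i ω, X (i + 1) ω)) := by
      funext ω
      show ((⟨i + ((1 : ℕ) : Fin n), X (i + ((1 : ℕ) : Fin n)) ω⟩ : B),
        (⟨i + ((n : ℕ) : Fin n), X (i + ((n : ℕ) : Fin n)) ω⟩ : B)) = _
      rw [hn0, h1]
      rfl
    rw [this]
    apply jE_comp_inj
    intro x y hxy
    simp only [Prod.mk.injEq] at hxy
    obtain ⟨h1', h2'⟩ := hxy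
    exact Prod.ext (sigma_mk_injective h2') (sigma_mk_injective h1')
  -- reindex the middle sum
  have h1n : ((1 : Fin n) : ℕ) = 1 := by
    rw [Fin.val_one']
    exact Nat.mod_eq_of_lt (by omega)
  have hmid : (∑ m ∈ Finset.Ico 2 n, jointEntropy p (W m)) =
      ∑ j ∈ Finset.univ.filter (fun j => j ≠ i ∧ j ≠ i + 1), jointEntropy p (X j) := by
    refine Finset.sum_nbij' (i := fun m => i + (m : Fin n)) (j := fun j => ((j - i : Fin n) : ℕ))
      ?_ ?_ ?_ ?_ ?_
    · intro m hm
      simp only [Finset.mem_Ico] at hm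
      have hv : ((m : Fin n) : ℕ) = m := Fin.val_cast_of_lt hm.2
      simp only [Finset.mem_filter, Finset.mem_univ, true_and]
      constructor
      · intro h
        have h0 : (m : Fin n) = 0 := by rwa [add_eq_left] at h
        have := congrArg Fin.val h0
        rw [hv, Fin.val_zero] at this
        omega
      · intro h
        have h0 : (m : Fin n) = 1 := add_left_cancel h
        have := congrArg Fin.val h0
        rw [hv, h1n] at this
        omega
    · intro j hj
      simp only [Finset.mem_filter, Finset.mem_univ, true_and] at hj
      simp only [Finset.mem_Ico]
      have h0 : j - i ≠ 0 := fun h => hj.1 (by rwa [sub_eq_zero] at h)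
      have h1 : j - i ≠ 1 := by
        intro h
        exact hj.2 (by rw [sub_eq_iff_eq_add.mp h, add_comm])
      have hv0 : ((j - i : Fin n) : ℕ) ≠ 0 := fun h => h0 (Fin.ext (by rw [h, Fin.val_zero]))
      have hv1 : ((j - i : Fin n) : ℕ) ≠ 1 := fun h => h1 (Fin.ext (by rw [h, h1n]))
      have := (j - i).isLt
      omega
    · intro m hm
      simp only [Finset.mem_Ico] at hm
      show ((i + (m : Fin n) - i : Fin n) : ℕ) = m
      rw [add_sub_cancel_left]
      exact Fin.val_cast_of_lt hm.2
    · intro j hj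
      show i + ((((j - i : Fin n) : ℕ) : ℕ) : Fin n) = j
      rw [Fin.cast_val_eq_self, add_sub_cancel]
    · intro m hm
      exact hW1 m
  have hrhs : (∑ m ∈ Finset.Ico 1 n, jointEntropy p (fun ω => (W m ω, W (m + 1) ω))) =
      ∑ j ∈ Finset.univ.filter (fun j => j ≠ i),
        jointEntropy p (fun ω => (X j ω, X (j + 1) ω)) := by
    refine Finset.sum_nbij' (i := fun m => i + (m : Fin n)) (j := fun j => ((j - i : Fin n) : ℕ))
      ?_ ?_ ?_ ?_ ?_
    · intro m hm
      simp only [Finset.mem_Ico] at hm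
      have hv : ((m : Fin n) : ℕ) = m := Fin.val_cast_of_lt hm.2
      simp only [Finset.mem_filter, Finset.mem_univ, true_and]
      intro h
      have h0 : (m : Fin n) = 0 := by rwa [add_eq_left] at h
      have := congrArg Fin.val h0
      rw [hv, Fin.val_zero] at this
      omega
    · intro j hj
      simp only [Finset.mem_filter, Finset.mem_univ, true_and] at hj
      simp only [Finset.mem_Ico]
      have h0 : j - i ≠ 0 := fun h => hj (by rwa [sub_eq_zero] at h)
      have hv0 : ((j - i : Fin n) : ℕ) ≠ 0 := fun h => h0 (Fin.ext (by rw [h, Fin.val_zero]))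
      have := (j - i).isLt
      omega
    · intro m hm
      simp only [Finset.mem_Ico] at hm
      show ((i + (m : Fin n) - i : Fin n) : ℕ) = m
      rw [add_sub_cancel_left]
      exact Fin.val_cast_of_lt hm.2
    · intro j hj
      show i + ((((j - i : Fin n) : ℕ) : ℕ) : Fin n) = j
      rw [Fin.cast_val_eq_self, add_sub_cancel]
    · intro m hm
      exact hWpair m
  rw [← hend, ← hmid, ← hrhs]
  exact hpath
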